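/- Let T_m be the m-th Chebyshev polynomial of the first kind. Then |T_m(x)| ≤ 1 for |x| ≤ 1, and for |x| ≥ 1, (1/2)·exp(2m·√((|x|−1)/(|x|+1))) ≤ |T_m(x)| ≤ (1/2)·(2|x|)^m. -/
import Mathlib

open Polynomial Polynomial.Chebyshev

lemma my_T_real_cosh (t : ℝ) (n : ℤ) : (T ℝ n).eval (Real.cosh t) = Real.cosh (n * t) := by
  have h := Polynomial.Chebyshev.T_complex_cos ((t : ℂ) * Complex.I) n
  rw [Complex.cos_mul_I] at h
  have h2 : Complex.cos ((n : ℂ) * ((t : ℂ) * Complex.I)) = Complex.cosh ((n : ℂ) * t) := by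
    rw [← Complex.cos_mul_I]; ring_nf
  rw [h2] at h
  have h3 : ((Real.cosh (n * t) : ℝ) : ℂ) = Complex.cosh ((n : ℂ) * t) := by
    push_cast [Complex.ofReal_cosh]; ring_nf
  have h4 := Polynomial.Chebyshev.complex_ofReal_eval_T (Real.cosh t) n
  rw [Complex.ofReal_cosh] at h4
  exact_mod_cast h4.trans (h.trans h3.symm)

lemma my_T_eval_neg (n : ℤ) (x : ℝ) : (T ℝ n).eval (-x) = (-1 : ℝ) ^ n * (T ℝ n).eval x := by
  have hne : (-1 : ℝ) ≠ 0 := by norm_num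
  induction n using Polynomial.Chebyshev.induct with
  | zero => simp
  | one => simp
  | add_two n ih1 ih2 =>
    rw [T_add_two]
    simp only [eval_sub, eval_mul, eval_X, eval_ofNat, ih1, ih2]
    rw [show ((n : ℤ) + 2) = ((n : ℤ) + 1) + 1 by ring, zpow_add₀ hne ((n:ℤ)+1) 1,
      zpow_add₀ hne (n:ℤ) 1]
    ring
  | neg_add_one n ih1 ih2 =>
    rw [show (-(n : ℤ) - 1) = (-(n:ℤ)) - 1 by ring, T_sub_one]
    simp only [eval_sub, eval_mul, eval_X, eval_ofNat, ih1, ih2]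
    rw [zpow_sub₀ hne (-(n:ℤ)) 1, zpow_add₀ hne (-(n:ℤ)) 1]
    norm_num
    ring

lemma my_sinh_le (u : ℝ) (hu : 0 ≤ u) : Real.sinh u ≤ u * Real.cosh u := by
  have hmono : MonotoneOn (fun u : ℝ => u * Real.cosh u - Real.sinh u) (Set.Ici 0) := by
    apply monotoneOn_of_deriv_nonneg (convex_Ici 0)
    · exact (Continuous.continuousOn (by continuity))
    · intro v hv
      have hd : HasDerivAt (fun u : ℝ => u * Real.cosh u - Real.sinh u)
          (1 * Real.cosh v + v * Real.sinh v - Real.cosh v) v :=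
        ((hasDerivAt_id v).mul (Real.hasDerivAt_cosh v)).sub (Real.hasDerivAt_sinh v)
      exact hd.differentiableAt.differentiableWithinAt
    · intro v hv
      rw [interior_Ici] at hv
      have hd : HasDerivAt (fun u : ℝ => u * Real.cosh u - Real.sinh u)
          (1 * Real.cosh v + v * Real.sinh v - Real.cosh v) v :=
        ((hasDerivAt_id v).mul (Real.hasDerivAt_cosh v)).sub (Real.hasDerivAt_sinh v)
      rw [hd.deriv]
      have h0 : 0 < v := Set.mem_Ioi.mp hv
      have h1 : 0 < Real.sinh v := Real.sinh_pos_iff.mpr h0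
      nlinarith [mul_pos h0 h1]
  have := hmono (Set.self_mem_Ici) (Set.mem_Ici.mpr hu) hu
  simp at this
  linarith

/-- Let `T_m` be the `m`-th Chebyshev polynomial of the first kind.  Then
`|T_m(x)| ≤ 1` for `|x| ≤ 1`, and for `|x| ≥ 1`,
`(1/2)·exp(2m·√((|x|−1)/(|x|+1))) ≤ |T_m(x)| ≤ (1/2)·(2|x|)^m`. -/
theorem chebyshev_boxcar_bounds (m : ℕ) (hm : 1 ≤ m) (x : ℝ) :
    (|x| ≤ 1 → |(Polynomial.Chebyshev.T ℝ m).eval x| ≤ 1) ∧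
    (1 ≤ |x| →
      (1 / 2) * Real.exp (2 * m * Real.sqrt ((|x| - 1) / (|x| + 1))) ≤
          |(Polynomial.Chebyshev.T ℝ m).eval x| ∧
        |(Polynomial.Chebyshev.T ℝ m).eval x| ≤ (1 / 2) * (2 * |x|) ^ m) := by
  constructor
  · intro hx
    obtain ⟨h1, h2⟩ := abs_le.mp hx
    have hxe : x = Real.cos (Real.arccos x) := (Real.cos_arccos h1 h2).symm
    rw [hxe, Polynomial.Chebyshev.T_real_cos]
    exact Real.abs_cos_le_one _
  · intro hx
    set y := |x| with hy
    have hy1 : 1 ≤ y := hx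
    set s := Real.sqrt (y ^ 2 - 1) with hsdef
    have hy2 : (0:ℝ) ≤ y ^ 2 - 1 := by nlinarith
    have hs2 : s ^ 2 = y ^ 2 - 1 := Real.sq_sqrt hy2
    have hs0 : 0 ≤ s := Real.sqrt_nonneg _
    set t := Real.log (y + s) with htdef
    have hys : 1 ≤ y + s := by linarith
    have hyspos : (0:ℝ) < y + s := by linarith
    have hexp : Real.exp t = y + s := Real.exp_log hyspos
    have hmul : (y + s) * (y - s) = 1 := by nlinarith [hs2]
    have hexpneg : Real.exp (-t) = y - s := by
      rw [Real.exp_neg, hexp]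
      exact inv_eq_of_mul_eq_one_right hmul
    have hcosh : Real.cosh t = y := by rw [Real.cosh_eq, hexp, hexpneg]; ring
    have ht0 : 0 ≤ t := Real.log_nonneg hys
    -- |T_m(x)| = cosh (m t)
    have habs : |(Polynomial.Chebyshev.T ℝ m).eval x| = Real.cosh (m * t) := by
      have hcoshpos := Real.cosh_pos ((m : ℤ) * t)
      rcases abs_choice x with hc | hc
      · have hxy : x = Real.cosh t := by rw [hcosh, hy]; exact hc.symm
        rw [hxy, my_T_real_cosh t (m : ℤ), abs_of_pos hcoshpos]
        push_cast; ring_nf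
      · have hxy : x = -Real.cosh t := by rw [hcosh, hy]; linarith [hc]
        rw [hxy, my_T_eval_neg (m : ℤ) (Real.cosh t), my_T_real_cosh t (m : ℤ), abs_mul,
          abs_of_pos hcoshpos]
        rw [zpow_natCast, abs_pow, abs_neg, abs_one, one_pow, one_mul]
        push_cast; ring_nf
    rw [habs]
    -- key: 2 * sqrt((y-1)/(y+1)) ≤ t
    have hu0 : (0:ℝ) ≤ t / 2 := by linarith
    set c := Real.cosh (t / 2) with hcdef
    set σ := Real.sinh (t / 2) with hσdef
    have hc0 : 0 < c := Real.cosh_pos _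
    have hσ0 : 0 ≤ σ := by
      rcases eq_or_lt_of_le hu0 with h | h
      · simp [hσdef, ← h]
      · exact (Real.sinh_pos_iff.mpr h).le
    have hid : c ^ 2 - σ ^ 2 = 1 := Real.cosh_sq_sub_sinh_sq _
    have hy' : y = c ^ 2 + σ ^ 2 := by
      rw [hcdef, hσdef, ← Real.cosh_two_mul, ← hcosh]; ring_nf
    have hr : Real.sqrt ((y - 1) / (y + 1)) = σ / c := by
      rw [show (y - 1) / (y + 1) = (σ / c) ^ 2 by
        rw [hy', div_pow]; rw [div_eq_div_iff (by nlinarith) (by positivity)]; nlinarith [hid]]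
      exact Real.sqrt_sq (div_nonneg hσ0 hc0.le)
    have h2r : 2 * Real.sqrt ((y - 1) / (y + 1)) ≤ t := by
      rw [hr, show 2 * (σ / c) = (2 * σ) / c by ring, div_le_iff₀ hc0]
      have := my_sinh_le (t / 2) hu0
      rw [← hσdef, ← hcdef] at this
      linarith
    constructor
    · -- lower bound
      have hmr : 2 * (m : ℝ) * Real.sqrt ((y - 1) / (y + 1)) ≤ (m : ℝ) * t := by
        have hm0 : (0:ℝ) ≤ (m : ℝ) := Nat.cast_nonneg m
        calc 2 * (m : ℝ) * Real.sqrt ((y - 1) / (y + 1))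
            = (m : ℝ) * (2 * Real.sqrt ((y - 1) / (y + 1))) := by ring
          _ ≤ (m : ℝ) * t := mul_le_mul_of_nonneg_left h2r hm0
      calc (1 / 2) * Real.exp (2 * m * Real.sqrt ((y - 1) / (y + 1)))
          ≤ (1 / 2) * Real.exp ((m : ℝ) * t) := by gcongr
        _ ≤ Real.cosh ((m : ℝ) * t) := by
            rw [Real.cosh_eq]
            have := Real.exp_pos (-((m : ℝ) * t))
            linarith
    · -- upper bound
      have he1 : Real.exp ((m : ℝ) * t) = (y + s) ^ m := by
        rw [Real.exp_nat_mul, hexp]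
      have he2 : Real.exp (-((m : ℝ) * t)) = (y - s) ^ m := by
        rw [show -((m : ℝ) * t) = (m : ℝ) * (-t) by ring, Real.exp_nat_mul, hexpneg]
      have hysnn : (0:ℝ) ≤ y - s := by
        rw [← hexpneg]; exact (Real.exp_pos _).le
      have hpow : (y + s) ^ m + (y - s) ^ m ≤ (2 * y) ^ m := by
        have := pow_add_pow_le (x := y + s) (y := y - s) hyspos.le hysnn
          (Nat.one_le_iff_ne_zero.mp hm)
        calc (y + s) ^ m + (y - s) ^ m ≤ ((y + s) + (y - s)) ^ m := this
          _ = (2 * y) ^ m := by ring_nf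
      rw [Real.cosh_eq, he1, he2]
      linarith
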